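/- For a finitely supported (empirical) distribution F̂ = (1/N)∑_j δ_{x_j} and any measurable loss ℓ bounded below, the worst-case expectation over the type-p Wasserstein ball satisfies the dual lower bound: inf_{F : d_p(F, F̂) ≤ ε} E_F[ℓ] ≥ sup_{λ ≥ 0} { (1/N)∑_{j=1}^N inf_{x ∈ ℝ^n} (ℓ(x) + λ‖x − x_j‖^p) − λ ε^p }. -/

import Mathlib

open MeasureTheory ENNReal

/-- The type-`p` Wasserstein distance between two measures on a normed space,
defined via couplings. -/
noncomputable def wassersteinDist {E : Type*} [NormedAddCommGroup E] [MeasurableSpace E]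
    (p : ℝ) (μ ν : Measure E) : ℝ≥0∞ :=
  ⨅ (π : Measure (E × E)) (_ : IsProbabilityMeasure π)
    (_ : π.map Prod.fst = μ) (_ : π.map Prod.snd = ν),
    (∫⁻ x, ENNReal.ofReal (‖x.1 - x.2‖ ^ p) ∂π) ^ (1 / p)

/-- Auxiliary: the inf-convolution `G w = inf_y (ℓ y + lam ‖y - w‖^p)`. -/
noncomputable def stmt7G {n : ℕ} (ℓ : (Fin n → ℝ) → ℝ) (lam p : ℝ)
    (w : Fin n → ℝ) : ℝ :=
  sInf {s : ℝ | ∃ y, s = ℓ y + lam * ‖y - w‖ ^ p}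

open Classical in
/-- Auxiliary: a measurable modification of `stmt7G` supported on the atoms. -/
noncomputable def stmt7G' {n N : ℕ} (x : Fin N → Fin n → ℝ)
    (ℓ : (Fin n → ℝ) → ℝ) (lam p : ℝ) (w : Fin n → ℝ) : ℝ :=
  if w ∈ Set.range x then stmt7G ℓ lam p w else 0

section stmt7Aux

variable {n N : ℕ} {x : Fin N → Fin n → ℝ} {ℓ : (Fin n → ℝ) → ℝ} {lam p : ℝ}

lemma stmt7G_le (hlam : 0 ≤ lam) (c : ℝ) (hbdd : ∀ y, c ≤ ℓ y) (w y : Fin n → ℝ) :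
    stmt7G ℓ lam p w ≤ ℓ y + lam * ‖y - w‖ ^ p := by
  refine csInf_le ⟨c, ?_⟩ ⟨y, rfl⟩
  rintro s ⟨z, rfl⟩
  have h1 : 0 ≤ lam * ‖z - w‖ ^ p :=
    mul_nonneg hlam (Real.rpow_nonneg (norm_nonneg _) p)
  linarith [hbdd z]

lemma stmt7G'_eq (w : Fin n → ℝ) (hw : w ∈ Set.range x) :
    stmt7G' x ℓ lam p w = stmt7G ℓ lam p w := by
  unfold stmt7G'
  rw [if_pos hw]

lemma stmt7G'_measurable (x : Fin N → Fin n → ℝ) (ℓ : (Fin n → ℝ) → ℝ) (lam p : ℝ) :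
    Measurable (stmt7G' x ℓ lam p) := by
  classical
  intro B _
  have hfin : (Set.range x).Finite := Set.finite_range x
  have hdecomp : stmt7G' x ℓ lam p ⁻¹' B =
      (stmt7G' x ℓ lam p ⁻¹' B ∩ Set.range x) ∪
      (stmt7G' x ℓ lam p ⁻¹' B ∩ (Set.range x)ᶜ) := by
    rw [← Set.inter_union_distrib_left, Set.union_compl_self, Set.inter_univ]
  rw [hdecomp]
  refine MeasurableSet.union ?_ ?_
  · exact (hfin.subset Set.inter_subset_right).countable.measurableSet
  · by_cases h0 : (0 : ℝ) ∈ B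
    · have : stmt7G' x ℓ lam p ⁻¹' B ∩ (Set.range x)ᶜ = (Set.range x)ᶜ := by
        refine Set.inter_eq_right.mpr fun w hw => ?_
        have : stmt7G' x ℓ lam p w = 0 := by unfold stmt7G'; rw [if_neg hw]
        simpa [Set.mem_preimage, this] using h0
      rw [this]
      exact hfin.measurableSet.compl
    · have : stmt7G' x ℓ lam p ⁻¹' B ∩ (Set.range x)ᶜ = ∅ := by
        ext w
        simp only [Set.mem_inter_iff, Set.mem_preimage, Set.mem_compl_iff, Set.mem_empty_iff_false,
          iff_false, not_and]
        intro hB hw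
        have : stmt7G' x ℓ lam p w = 0 := by unfold stmt7G'; rw [if_neg hw]
        rw [this] at hB
        exact h0 hB
      rw [this]
      exact MeasurableSet.empty

lemma stmt7G'_bound (w : Fin n → ℝ) :
    ‖stmt7G' x ℓ lam p w‖ ≤ ∑ j, ‖stmt7G ℓ lam p (x j)‖ := by
  unfold stmt7G'
  split_ifs with h
  · obtain ⟨j, rfl⟩ := h
    exact Finset.single_le_sum (f := fun j => ‖stmt7G ℓ lam p (x j)‖)
      (fun k _ => norm_nonneg _) (Finset.mem_univ j)
  · simpa using Finset.sum_nonneg (fun k _ => norm_nonneg (stmt7G ℓ lam p (x k)))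

end stmt7Aux


/-- Dual lower bound -/
theorem stmt_7 (n N : ℕ) (hn : 1 ≤ n) (hN : 1 ≤ N)
    (x : Fin N → Fin n → ℝ) (ε p : ℝ) (hε : 0 < ε) (hp : 1 ≤ p)
    (ℓ : (Fin n → ℝ) → ℝ) (hmeas : Measurable ℓ) (c : ℝ) (hbdd : ∀ y, c ≤ ℓ y) :
    ∀ lam : ℝ, 0 ≤ lam →
      ∀ F : Measure (Fin n → ℝ), IsProbabilityMeasure F →
        wassersteinDist p F ((N : ℝ≥0∞)⁻¹ • ∑ j, Measure.dirac (x j)) ≤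
          ENNReal.ofReal ε →
        Integrable ℓ F →
        (∫ y, ℓ y ∂F) ≥
          (1 / (N : ℝ)) * ∑ j,
              sInf {s : ℝ | ∃ y : Fin n → ℝ, s = ℓ y + lam * ‖y - x j‖ ^ p}
            - lam * ε ^ p := by
  intro lam hlam F hF hW hInt
  have hp0 : (0:ℝ) < p := lt_of_lt_of_le one_pos hp
  -- coupling extraction
  have hcoup : ∀ δ : ℝ, 0 < δ → ∃ π : Measure ((Fin n → ℝ) × (Fin n → ℝ)),
      IsProbabilityMeasure π ∧ π.map Prod.fst = F ∧
      π.map Prod.snd = ((N : ℝ≥0∞)⁻¹ • ∑ j, Measure.dirac (x j)) ∧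
      ∫⁻ z, ENNReal.ofReal (‖z.1 - z.2‖ ^ p) ∂π ≤ ENNReal.ofReal ((ε + δ) ^ p) := by
    intro δ hδ
    have hlt : wassersteinDist p F ((N : ℝ≥0∞)⁻¹ • ∑ j, Measure.dirac (x j)) <
        ENNReal.ofReal (ε + δ) := by
      refine lt_of_le_of_lt hW ?_
      exact ENNReal.ofReal_lt_ofReal_iff_of_nonneg hε.le |>.mpr (by linarith)
    unfold wassersteinDist at hlt
    simp only [iInf_lt_iff] at hlt
    obtain ⟨π, h1, h2, h3, h4⟩ := hlt
    refine ⟨π, h1, h2, h3, ?_⟩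
    have hpne : p ≠ 0 := ne_of_gt hp0
    have hle : (∫⁻ z, ENNReal.ofReal (‖z.1 - z.2‖ ^ p) ∂π) ≤ (ENNReal.ofReal (ε + δ)) ^ p := by
      calc (∫⁻ z, ENNReal.ofReal (‖z.1 - z.2‖ ^ p) ∂π)
          = ((∫⁻ z, ENNReal.ofReal (‖z.1 - z.2‖ ^ p) ∂π) ^ (1/p)) ^ p := by
            rw [← ENNReal.rpow_mul, one_div, inv_mul_cancel₀ hpne, ENNReal.rpow_one]
        _ ≤ (ENNReal.ofReal (ε + δ)) ^ p := ENNReal.rpow_le_rpow h4.le hp0.le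
    rwa [ENNReal.ofReal_rpow_of_pos (by linarith)] at hle
  -- key inequality for each δ
  have key : ∀ δ : ℝ, 0 < δ →
      (1 / (N : ℝ)) * ∑ j, stmt7G ℓ lam p (x j) - lam * (ε + δ) ^ p ≤ ∫ y, ℓ y ∂F := by
    intro δ hδ
    obtain ⟨π, hπ, hfst, hsnd, hI⟩ := hcoup δ hδ
    have hfin : (Set.range x).Finite := Set.finite_range x
    have hRm : MeasurableSet (Set.range x) := hfin.measurableSet
    -- a.e. second coordinate is an atom
    have hae : ∀ᵐ z ∂π, z.2 ∈ Set.range x := by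
      have hmap := Measure.map_apply (measurable_snd (α := Fin n → ℝ) (β := Fin n → ℝ))
        hRm.compl (μ := π)
      rw [hsnd] at hmap
      have hz : ∀ j : Fin N, Measure.dirac (x j) ((Set.range x)ᶜ) = 0 := by
        intro j
        rw [Measure.dirac_apply' _ hRm.compl]
        simp [Set.indicator_of_notMem, Set.mem_range]
      have h0 : π (Prod.snd ⁻¹' (Set.range x)ᶜ) = 0 := by
        rw [← hmap, Measure.smul_apply, Measure.finset_sum_apply]
        simp [hz]
      rw [MeasureTheory.ae_iff]
      exact h0
    -- integrability of the cost
    have hqmeas : Measurable fun z : (Fin n → ℝ) × (Fin n → ℝ) => ‖z.1 - z.2‖ ^ p :=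
      (Real.continuous_rpow_const hp0.le).measurable.comp
        (measurable_fst.sub measurable_snd).norm
    have hqnn : ∀ z : (Fin n → ℝ) × (Fin n → ℝ), 0 ≤ ‖z.1 - z.2‖ ^ p := fun z =>
      Real.rpow_nonneg (norm_nonneg _) p
    have hq_int : Integrable (fun z : (Fin n → ℝ) × (Fin n → ℝ) => ‖z.1 - z.2‖ ^ p) π := by
      refine ⟨hqmeas.aestronglyMeasurable, ?_⟩
      rw [hasFiniteIntegral_iff_ofReal (ae_of_all _ hqnn)]
      exact lt_of_le_of_lt hI ENNReal.ofReal_lt_top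
    have hq_val : ∫ z, ‖z.1 - z.2‖ ^ p ∂π ≤ (ε + δ) ^ p := by
      rw [integral_eq_lintegral_of_nonneg_ae (ae_of_all _ hqnn) hqmeas.aestronglyMeasurable]
      exact ENNReal.toReal_le_of_le_ofReal (Real.rpow_nonneg (by linarith) p) hI
    have hG'snd_int : Integrable (fun z : (Fin n → ℝ) × (Fin n → ℝ) =>
        stmt7G' x ℓ lam p z.2) π :=
      Integrable.mono' (integrable_const (∑ j, ‖stmt7G ℓ lam p (x j)‖))
        ((stmt7G'_measurable x ℓ lam p).comp measurable_snd).aestronglyMeasurable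
        (ae_of_all _ fun z => stmt7G'_bound z.2)
    have hℓfst_int : Integrable (fun z : (Fin n → ℝ) × (Fin n → ℝ) => ℓ z.1) π := by
      have h := hInt
      rw [← hfst] at h
      exact (integrable_map_measure hmeas.aestronglyMeasurable
        measurable_fst.aemeasurable).mp h
    -- pointwise a.e. inequality
    have hptwise : ∀ᵐ z ∂π,
        stmt7G' x ℓ lam p z.2 - lam * ‖z.1 - z.2‖ ^ p ≤ ℓ z.1 := by
      filter_upwards [hae] with z hz
      have h1 := stmt7G_le (p := p) hlam c hbdd z.2 z.1
      rw [stmt7G'_eq z.2 hz]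
      linarith
    -- integrate
    have hmono : ∫ z, (stmt7G' x ℓ lam p z.2 - lam * ‖z.1 - z.2‖ ^ p) ∂π ≤
        ∫ z, ℓ z.1 ∂π :=
      integral_mono_ae (hG'snd_int.sub (hq_int.const_mul lam)) hℓfst_int hptwise
    rw [integral_sub hG'snd_int (hq_int.const_mul lam),
      MeasureTheory.integral_const_mul] at hmono
    -- compute ∫ G' z.2 dπ
    have hG'int_val : ∫ z, stmt7G' x ℓ lam p z.2 ∂π =
        (1 / (N : ℝ)) * ∑ j, stmt7G ℓ lam p (x j) := by
      have h1 : ∫ z, stmt7G' x ℓ lam p z.2 ∂π =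
          ∫ w, stmt7G' x ℓ lam p w ∂(π.map Prod.snd) :=
        (integral_map measurable_snd.aemeasurable
          (stmt7G'_measurable x ℓ lam p).aestronglyMeasurable).symm
      rw [h1, hsnd, integral_smul_measure, integral_finset_sum_measure
        (fun j _ => Integrable.mono'
          (integrable_const (∑ j, ‖stmt7G ℓ lam p (x j)‖))
          (stmt7G'_measurable x ℓ lam p).aestronglyMeasurable
          (ae_of_all _ fun w => stmt7G'_bound w))]
      have h2 : ∀ j : Fin N, ∫ w, stmt7G' x ℓ lam p w ∂(Measure.dirac (x j)) =
          stmt7G ℓ lam p (x j) := by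
        intro j
        rw [integral_dirac]
        exact stmt7G'_eq (x j) ⟨j, rfl⟩
      rw [Finset.sum_congr rfl (fun j _ => h2 j)]
      have h3 : ((N : ℝ≥0∞)⁻¹).toReal = 1 / (N : ℝ) := by
        simp [ENNReal.toReal_inv]
      rw [h3, smul_eq_mul]
    -- compute ∫ ℓ z.1 dπ
    have hℓint_val : ∫ z, ℓ z.1 ∂π = ∫ y, ℓ y ∂F := by
      rw [← hfst]
      exact (integral_map measurable_fst.aemeasurable hmeas.aestronglyMeasurable).symm
    rw [hG'int_val, hℓint_val] at hmono
    have hmul : lam * ∫ z, ‖z.1 - z.2‖ ^ p ∂π ≤ lam * (ε + δ) ^ p :=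
      mul_le_mul_of_nonneg_left hq_val hlam
    linarith
  -- take the limit δ → 0⁺
  have htend : Filter.Tendsto
      (fun δ : ℝ => (1 / (N : ℝ)) * ∑ j, stmt7G ℓ lam p (x j) - lam * (ε + δ) ^ p)
      (nhdsWithin 0 (Set.Ioi 0))
      (nhds ((1 / (N : ℝ)) * ∑ j, stmt7G ℓ lam p (x j) - lam * ε ^ p)) := by
    have h1 : Filter.Tendsto (fun δ : ℝ => (ε + δ) ^ p) (nhds 0) (nhds (ε ^ p)) := by
      have hc : ContinuousAt (fun t : ℝ => t ^ p) ε :=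
        Real.continuousAt_rpow_const ε p (Or.inl (ne_of_gt hε))
      have hadd : Filter.Tendsto (fun δ : ℝ => ε + δ) (nhds 0) (nhds ε) := by
        simpa using (continuous_add_left ε).tendsto (0 : ℝ)
      exact hc.tendsto.comp hadd
    exact ((tendsto_const_nhds.sub (h1.const_mul lam)).mono_left nhdsWithin_le_nhds)
  have hle : (1 / (N : ℝ)) * ∑ j, stmt7G ℓ lam p (x j) - lam * ε ^ p ≤ ∫ y, ℓ y ∂F := by
    refine le_of_tendsto htend ?_
    filter_upwards [self_mem_nhdsWithin] with δ hδ
    exact key δ hδ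
  exact hle
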